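/- Let X be a non-negative absolutely continuous random variable with residual entropy H(t), past entropy H̄(t), weighted residual entropy H^w(t) and weighted past entropy H̄^w(t). Then for all b > 0 and t > b: H^w_{X+b}(t) = H^w(t-b) + b H(t-b), and H̄^w_{X+b}(t) = H̄^w(t-b) + b H̄(t-b). -/

import Mathlib

open MeasureTheory

/-- Survival function `F̄(t) = ∫_t^∞ f(x) dx` of a density `f`. -/
noncomputable def survFn (f : ℝ → ℝ) (t : ℝ) : ℝ := ∫ x in Set.Ioi t, f x

/-- Distribution function `F(t) = ∫_{-∞}^t f(x) dx` of a density `f`. -/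
noncomputable def distFn (f : ℝ → ℝ) (t : ℝ) : ℝ := ∫ x in Set.Iic t, f x

/-- Residual entropy `H(t) = -∫_t^∞ (f(x)/F̄(t)) log (f(x)/F̄(t)) dx`. -/
noncomputable def resEnt (f : ℝ → ℝ) (t : ℝ) : ℝ :=
  -∫ x in Set.Ioi t, f x / survFn f t * Real.log (f x / survFn f t)

/-- Weighted residual entropy `H^w(t) = -∫_t^∞ x (f(x)/F̄(t)) log (f(x)/F̄(t)) dx`. -/
noncomputable def wResEnt (f : ℝ → ℝ) (t : ℝ) : ℝ :=
  -∫ x in Set.Ioi t, x * (f x / survFn f t) * Real.log (f x / survFn f t)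

/-- Past entropy `H̄(t) = -∫_0^t (f(x)/F(t)) log (f(x)/F(t)) dx`. -/
noncomputable def pastEnt (f : ℝ → ℝ) (t : ℝ) : ℝ :=
  -∫ x in Set.Ioc 0 t, f x / distFn f t * Real.log (f x / distFn f t)

/-- Weighted past entropy `H̄^w(t) = -∫_0^t x (f(x)/F(t)) log (f(x)/F(t)) dx`. -/
noncomputable def wPastEnt (f : ℝ → ℝ) (t : ℝ) : ℝ :=
  -∫ x in Set.Ioc 0 t, x * (f x / distFn f t) * Real.log (f x / distFn f t)

/-- The support `S = (0, ν)` (with `ν ≤ +∞`) as a subset of `ℝ`. -/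
def supS (ν : EReal) : Set ℝ := {x : ℝ | 0 < x ∧ (x : EReal) < ν}

lemma shift_set_int (g : ℝ → ℝ) (s : Set ℝ) (b : ℝ) :
    ∫ x in (· - b) ⁻¹' s, g (x - b) = ∫ x in s, g x :=
  (measurePreserving_sub_right volume b).setIntegral_preimage_emb
    (MeasurableEquiv.subRight b).measurableEmbedding g s

lemma shift_Ioi (g : ℝ → ℝ) (a b : ℝ) :
    ∫ x in Set.Ioi a, g (x - b) = ∫ x in Set.Ioi (a - b), g x := by
  rw [← shift_set_int g _ b]
  congr 1
  ext x; simp [lt_sub_iff_add_lt, sub_lt_iff_lt_add]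

lemma shift_Ioc (g : ℝ → ℝ) (a c b : ℝ) :
    ∫ x in Set.Ioc a c, g (x - b) = ∫ x in Set.Ioc (a - b) (c - b), g x := by
  rw [← shift_set_int g _ b]
  congr 1
  ext x; simp [lt_sub_iff_add_lt, sub_lt_iff_lt_add, sub_le_sub_iff_right]

lemma shift_Iic (g : ℝ → ℝ) (a b : ℝ) :
    ∫ x in Set.Iic a, g (x - b) = ∫ x in Set.Iic (a - b), g x := by
  rw [← shift_set_int g _ b]
  congr 1
  ext x; simp [sub_le_sub_iff_right]

/-- Let `X` be a non-negative absolutely continuous random variable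
with density `f`, residual entropy `H`, past entropy `H̄`, weighted residual entropy
`H^w` and weighted past entropy `H̄^w`. For `b > 0`, the random variable `X + b` has
density `x ↦ f(x - b)`, and for all `t > b`:
`H^w_{X+b}(t) = H^w(t-b) + b H(t-b)` and `H̄^w_{X+b}(t) = H̄^w(t-b) + b H̄(t-b)`. -/
theorem wEnt_shift (f : ℝ → ℝ) (b t : ℝ) (hb : 0 < b) (ht : b < t)
    (hf_nonneg : ∀ x, 0 ≤ f x) (hf_supp : ∀ x, x < 0 → f x = 0)
    (hf_dens : ∫ x, f x = 1)
    (hmean : Integrable (fun x => x * f x))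
    (hent : Integrable (fun x => f x * Real.log (f x)))
    (hwent : Integrable (fun x => x * f x * Real.log (f x)))
    (hsurv : 0 < survFn f (t - b)) (hdist : 0 < distFn f (t - b)) :
    wResEnt (fun x => f (x - b)) t = wResEnt f (t - b) + b * resEnt f (t - b)
    ∧ wPastEnt (fun x => f (x - b)) t = wPastEnt f (t - b) + b * pastEnt f (t - b) := by
  set c := t - b with hc
  have hfi : Integrable f := by
    by_contra h
    rw [integral_undef h] at hf_dens
    exact one_ne_zero hf_dens.symm
  -- shifted survival / distribution functions
  have hS : survFn (fun x => f (x - b)) t = survFn f c := by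
    simp only [survFn]; exact shift_Ioi f t b
  have hD : distFn (fun x => f (x - b)) t = distFn f c := by
    simp only [distFn]; exact shift_Iic f t b
  set S := survFn f c with hSdef
  set D := distFn f c with hDdef
  have hSne : S ≠ 0 := ne_of_gt hsurv
  have hDne : D ≠ 0 := ne_of_gt hdist
  -- pointwise expansions
  have eqGS : ∀ y, f y / S * Real.log (f y / S)
      = f y * Real.log (f y) / S - f y * Real.log S / S := by
    intro y
    rcases eq_or_lt_of_le (hf_nonneg y) with h | h
    · simp [← h]
    · rw [Real.log_div (ne_of_gt h) hSne]; ring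
  have eqGD : ∀ y, f y / D * Real.log (f y / D)
      = f y * Real.log (f y) / D - f y * Real.log D / D := by
    intro y
    rcases eq_or_lt_of_le (hf_nonneg y) with h | h
    · simp [← h]
    · rw [Real.log_div (ne_of_gt h) hDne]; ring
  -- integrability
  have intGS : Integrable (fun y => f y / S * Real.log (f y / S)) := by
    simp only [eqGS]
    exact (hent.div_const S).sub ((hfi.mul_const (Real.log S)).div_const S)
  have intGD : Integrable (fun y => f y / D * Real.log (f y / D)) := by
    simp only [eqGD]
    exact (hent.div_const D).sub ((hfi.mul_const (Real.log D)).div_const D)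
  have intyGS : Integrable (fun y => y * (f y / S) * Real.log (f y / S)) := by
    have : (fun y => y * (f y / S) * Real.log (f y / S))
        = fun y => y * f y * Real.log (f y) / S - y * f y * Real.log S / S := by
      funext y
      rcases eq_or_lt_of_le (hf_nonneg y) with h | h
      · simp [← h]
      · rw [Real.log_div (ne_of_gt h) hSne]; ring
    rw [this]
    exact (hwent.div_const S).sub ((hmean.mul_const (Real.log S)).div_const S)
  have intyGD : Integrable (fun y => y * (f y / D) * Real.log (f y / D)) := by
    have : (fun y => y * (f y / D) * Real.log (f y / D))
        = fun y => y * f y * Real.log (f y) / D - y * f y * Real.log D / D := by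
      funext y
      rcases eq_or_lt_of_le (hf_nonneg y) with h | h
      · simp [← h]
      · rw [Real.log_div (ne_of_gt h) hDne]; ring
    rw [this]
    exact (hwent.div_const D).sub ((hmean.mul_const (Real.log D)).div_const D)
  constructor
  · -- residual part
    simp only [wResEnt, resEnt, hS, ← hSdef]
    have key : ∫ x in Set.Ioi t, x * (f (x - b) / S) * Real.log (f (x - b) / S)
        = ∫ y in Set.Ioi c, (y + b) * (f y / S) * Real.log (f y / S) := by
      have := shift_Ioi (fun y => (y + b) * (f y / S) * Real.log (f y / S)) t b
      simpa [sub_add_cancel] using this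
    rw [key]
    have split : ∫ y in Set.Ioi c, (y + b) * (f y / S) * Real.log (f y / S)
        = (∫ y in Set.Ioi c, y * (f y / S) * Real.log (f y / S))
          + b * ∫ y in Set.Ioi c, f y / S * Real.log (f y / S) := by
      rw [← integral_const_mul, ← integral_add (intyGS.restrict)
        ((intGS.restrict).const_mul b)]
      congr 1; funext y; ring
    rw [split]; ring
  · -- past part
    simp only [wPastEnt, pastEnt, hD, ← hDdef]
    have key : ∫ x in Set.Ioc 0 t, x * (f (x - b) / D) * Real.log (f (x - b) / D)
        = ∫ y in Set.Ioc (-b) c, (y + b) * (f y / D) * Real.log (f y / D) := by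
      have := shift_Ioc (fun y => (y + b) * (f y / D) * Real.log (f y / D)) 0 t b
      simpa [sub_add_cancel, zero_sub] using this
    rw [key]
    have hbc : (0:ℝ) ≤ c := by simp [hc]; linarith
    have hunion : Set.Ioc (-b) c = Set.Ioc (-b) 0 ∪ Set.Ioc 0 c := by
      rw [Set.Ioc_union_Ioc_eq_Ioc (by linarith) hbc]
    have hdisj : Disjoint (Set.Ioc (-b) (0:ℝ)) (Set.Ioc 0 c) :=
      Set.Ioc_disjoint_Ioc_of_le le_rfl
    have intH : Integrable (fun y => (y + b) * (f y / D) * Real.log (f y / D)) := by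
      have : (fun y => (y + b) * (f y / D) * Real.log (f y / D))
          = fun y => y * (f y / D) * Real.log (f y / D)
            + b * (f y / D * Real.log (f y / D)) := by
        funext y; ring
      rw [this]
      exact intyGD.add (intGD.const_mul b)
    have hzero : ∫ y in Set.Ioc (-b) (0:ℝ), (y + b) * (f y / D) * Real.log (f y / D) = 0 := by
      rw [integral_Ioc_eq_integral_Ioo]
      apply setIntegral_eq_zero_of_forall_eq_zero
      intro y hy
      rw [hf_supp y hy.2]
      simp
    rw [hunion, setIntegral_union hdisj measurableSet_Ioc intH.integrableOn intH.integrableOn,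
      hzero, zero_add]
    have split : ∫ y in Set.Ioc 0 c, (y + b) * (f y / D) * Real.log (f y / D)
        = (∫ y in Set.Ioc 0 c, y * (f y / D) * Real.log (f y / D))
          + b * ∫ y in Set.Ioc 0 c, f y / D * Real.log (f y / D) := by
      rw [← integral_const_mul, ← integral_add (intyGD.restrict)
        ((intGD.restrict).const_mul b)]
      congr 1; funext y; ring
    rw [split]; ring
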